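/- Conditional-mean step function is a mean-preserving contraction: let F be a CDF on [v̲,v̄] and let 0 = x₀ < x₁ < … < x_n = 1 be a partition of [0,1]. Define G^{-1}(t) = (∫_{x_{i}}^{x_{i+1}} F^{-1}(s)ds)/(x_{i+1} − x_i) for t ∈ [x_i, x_{i+1}). Then G^{-1} is non-decreasing and ∫_x^1 G^{-1}(t)dt ≤ ∫_x^1 F^{-1}(t)dt for all x ∈ [0,1], with equality at x = 0. -/

import Mathlib

open MeasureTheory intervalIntegral

lemma step_cell {g : ℝ → ℝ} {a b C : ℝ} (hab : a ≤ b)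
    (h : ∀ t ∈ Set.Ico a b, g t = C) :
    IntervalIntegrable g volume a b ∧ (∫ t in a..b, g t) = (b - a) * C := by
  have hb : ∀ᵐ t : ℝ ∂volume, t ≠ b := by
    have h0 : volume ({b} : Set ℝ) = 0 := measure_singleton b
    rw [ae_iff]
    simpa using h0
  have hae : ∀ᵐ t ∂volume, t ∈ Set.uIoc a b → g t = C := by
    filter_upwards [hb] with t ht htm
    rw [Set.uIoc_of_le hab] at htm
    exact h t ⟨le_of_lt htm.1, lt_of_le_of_ne htm.2 ht⟩
  have hres : g =ᵐ[volume.restrict (Set.uIoc a b)] fun _ => C := by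
    rw [Filter.EventuallyEq, ae_restrict_iff' measurableSet_uIoc]
    exact hae
  constructor
  · rw [intervalIntegrable_iff]
    refine ((MeasureTheory.integrableOn_const_iff (C := C)).mpr (Or.inr ?_)).congr hres.symm
    rw [Set.uIoc_of_le hab, Real.volume_Ioc]
    exact ENNReal.ofReal_lt_top
  · rw [intervalIntegral.integral_congr_ae hae, intervalIntegral.integral_const,
      smul_eq_mul]

lemma avg_tail {f : ℝ → ℝ} {a y b : ℝ} (hay : a ≤ y) (hyb : y < b)
    (hmono : MonotoneOn f (Set.Icc a b))
    (hint : IntervalIntegrable f volume a b) :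
    (b - y) * ((∫ s in a..b, f s) / (b - a)) ≤ ∫ s in y..b, f s := by
  have hab : a < b := lt_of_le_of_lt hay hyb
  have hy : y ∈ Set.Icc a b := ⟨hay, le_of_lt hyb⟩
  have h1int : IntervalIntegrable f volume a y :=
    hint.mono_set (by rw [Set.uIcc_of_le hay, Set.uIcc_of_le hab.le]; exact Set.Icc_subset_Icc le_rfl hyb.le)
  have h2int : IntervalIntegrable f volume y b :=
    hint.mono_set (by rw [Set.uIcc_of_le hyb.le, Set.uIcc_of_le hab.le]; exact Set.Icc_subset_Icc hay le_rfl)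
  have h1 : (∫ s in a..y, f s) ≤ (y - a) * f y := by
    have := intervalIntegral.integral_mono_on hay h1int intervalIntegrable_const
      (fun t ht => hmono (⟨ht.1, le_trans ht.2 hyb.le⟩) hy ht.2)
    simpa [smul_eq_mul] using this
  have h2 : (b - y) * f y ≤ ∫ s in y..b, f s := by
    have := intervalIntegral.integral_mono_on hyb.le intervalIntegrable_const h2int
      (fun t ht => hmono hy (⟨le_trans hay ht.1, ht.2⟩) ht.1)
    simpa [smul_eq_mul] using this
  have hsplit : (∫ s in a..y, f s) + (∫ s in y..b, f s) = ∫ s in a..b, f s :=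
    intervalIntegral.integral_add_adjacent_intervals h1int h2int
  rw [mul_div_assoc', div_le_iff₀ (by linarith : (0:ℝ) < b - a), ← hsplit]
  nlinarith [h1, h2, sub_nonneg.mpr hay, sub_pos.mpr hyb]

/-- The conditional-mean step function of a quantile function over a partition of `[0,1]` is
non-decreasing and is a mean-preserving contraction in the quantile (tail-integral) sense. -/
theorem conditional_mean_step_mpc (n : ℕ) (hn : 1 ≤ n) (x : ℕ → ℝ)
    (hx0 : x 0 = 0) (hxn : x n = 1)
    (hxmono : ∀ i, i < n → x i < x (i + 1))
    (Finv : ℝ → ℝ) (hFmono : MonotoneOn Finv (Set.Icc 0 1))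
    (hFint : IntervalIntegrable Finv MeasureTheory.volume 0 1)
    (Ginv : ℝ → ℝ)
    (hG : ∀ i, i < n → ∀ t ∈ Set.Ico (x i) (x (i + 1)),
      Ginv t = (∫ s in x i..x (i + 1), Finv s) / (x (i + 1) - x i)) :
    MonotoneOn Ginv (Set.Ico 0 1) ∧
    (∀ y ∈ Set.Icc (0:ℝ) 1, ∫ t in y..1, Ginv t ≤ ∫ t in y..1, Finv t) ∧
    (∫ t in (0:ℝ)..1, Ginv t = ∫ t in (0:ℝ)..1, Finv t) := by
  classical
  set c : ℕ → ℝ := fun i => (∫ s in x i..x (i + 1), Finv s) / (x (i + 1) - x i) with hc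
  -- basic monotonicity of partition points
  have hxle : ∀ {i j : ℕ}, i ≤ j → j ≤ n → x i ≤ x j := by
    intro i j hij hjn
    induction j with
    | zero => simp [Nat.le_zero.mp hij]
    | succ k ih =>
      rcases Nat.lt_or_ge i (k + 1) with h | h
      · exact le_trans (ih (Nat.lt_succ_iff.mp h) (le_trans (Nat.le_succ k) hjn))
          (le_of_lt (hxmono k (Nat.lt_of_succ_le hjn)))
      · have : i = k + 1 := le_antisymm hij h
        simp [this]
  have hx01 : ∀ i, i ≤ n → x i ∈ Set.Icc (0:ℝ) 1 := fun i hi =>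
    ⟨hx0 ▸ hxle (Nat.zero_le i) hi, hxn ▸ hxle hi le_rfl⟩
  have subint : ∀ {a b : ℝ}, a ∈ Set.Icc (0:ℝ) 1 → b ∈ Set.Icc (0:ℝ) 1 →
      IntervalIntegrable Finv volume a b := by
    intro a b ha hb
    refine hFint.mono_set ?_
    rw [Set.uIcc_of_le (zero_le_one)]
    exact Set.uIcc_subset_Icc ha hb
  -- positivity of cell lengths
  have hpos : ∀ i, i < n → (0:ℝ) < x (i + 1) - x i := fun i hi => sub_pos.mpr (hxmono i hi)
  -- cell bounds for c
  have chigh : ∀ i, i < n → c i ≤ Finv (x (i + 1)) := by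
    intro i hi
    rw [hc, div_le_iff₀ (hpos i hi)]
    have := intervalIntegral.integral_mono_on (hxmono i hi).le
      (subint (hx01 i hi.le) (hx01 (i+1) hi)) intervalIntegrable_const
      (fun t ht => hFmono
        (Set.Icc_subset_Icc (hx01 i hi.le).1 (hx01 (i+1) hi).2 ht)
        (hx01 (i+1) hi) ht.2)
    simpa [smul_eq_mul, mul_comm] using this
  have clow : ∀ i, i < n → Finv (x i) ≤ c i := by
    intro i hi
    rw [hc, le_div_iff₀ (hpos i hi)]
    have := intervalIntegral.integral_mono_on (hxmono i hi).le
      intervalIntegrable_const (subint (hx01 i hi.le) (hx01 (i+1) hi))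
      (fun t ht => hFmono (hx01 i hi.le)
        (Set.Icc_subset_Icc (hx01 i hi.le).1 (hx01 (i+1) hi).2 ht) ht.1)
    simpa [smul_eq_mul, mul_comm] using this
  have cmono : ∀ i j, i ≤ j → j < n → c i ≤ c j := by
    intro i j hij hjn
    induction j with
    | zero => simp [Nat.le_zero.mp hij]
    | succ k ih =>
      rcases Nat.lt_or_ge i (k + 1) with h | h
      · have hkn : k < n := lt_trans (Nat.lt_succ_self k) hjn
        exact le_trans (ih (Nat.lt_succ_iff.mp h) hkn)
          (le_trans (chigh k hkn) (clow (k+1) hjn))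
      · have : i = k + 1 := le_antisymm hij h
        simp [this]
  -- integral of Ginv over a cell
  have cellG : ∀ i, i < n → IntervalIntegrable Ginv volume (x i) (x (i+1)) ∧
      (∫ t in x i..x (i+1), Ginv t) = ∫ t in x i..x (i+1), Finv t := by
    intro i hi
    obtain ⟨hint, heq⟩ := step_cell (g := Ginv) (C := c i) (hxmono i hi).le (hG i hi)
    refine ⟨hint, ?_⟩
    rw [heq]
    show (x (i + 1) - x i) * ((∫ s in x i..x (i + 1), Finv s) / (x (i + 1) - x i)) = _
    rw [mul_comm, div_mul_cancel₀ _ (ne_of_gt (hpos i hi))]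
  -- tail equality by downward induction
  have tail : ∀ d, d ≤ n → IntervalIntegrable Ginv volume (x (n - d)) (x n) ∧
      (∫ t in x (n - d)..x n, Ginv t) = ∫ t in x (n - d)..x n, Finv t := by
    intro d
    induction d with
    | zero => simp [IntervalIntegrable.refl]
    | succ k ih =>
      intro hk
      have hk' : k ≤ n := le_trans (Nat.le_succ k) hk
      obtain ⟨ihint, iheq⟩ := ih hk'
      have hlt : n - (k + 1) < n := Nat.sub_lt (lt_of_lt_of_le (Nat.succ_pos k) hk) (Nat.succ_pos k)
      have heq1 : n - (k + 1) + 1 = n - k := by omega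
      obtain ⟨cint, ceq⟩ := cellG (n - (k + 1)) hlt
      rw [heq1] at cint ceq
      have hFint1 : IntervalIntegrable Finv volume (x (n - (k+1))) (x (n - k)) :=
        subint (hx01 _ (Nat.sub_le n _)) (hx01 _ (Nat.sub_le n _))
      have hFint2 : IntervalIntegrable Finv volume (x (n - k)) (x n) :=
        subint (hx01 _ (Nat.sub_le n _)) (hx01 n le_rfl)
      refine ⟨cint.trans ihint, ?_⟩
      rw [← intervalIntegral.integral_add_adjacent_intervals cint ihint,
        ← intervalIntegral.integral_add_adjacent_intervals hFint1 hFint2, ceq, iheq]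
  -- locating a point in a cell
  have find : ∀ t, t ∈ Set.Ico (0:ℝ) 1 → ∃ i, i < n ∧ t ∈ Set.Ico (x i) (x (i + 1)) := by
    intro t ht
    set i := Nat.findGreatest (fun j => x j ≤ t) n with hi
    have hP0 : x 0 ≤ t := by rw [hx0]; exact ht.1
    have hPi : x i ≤ t := Nat.findGreatest_spec (P := fun j => x j ≤ t) (Nat.zero_le n) hP0
    have hin : i ≤ n := Nat.findGreatest_le n
    have hlt : i < n := by
      rcases lt_or_eq_of_le hin with h | h
      · exact h
      · exfalso; rw [h, hxn] at hPi; exact absurd ht.2 (not_lt.mpr hPi)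
    have hnot : ¬ x (i + 1) ≤ t :=
      Nat.findGreatest_is_greatest (Nat.lt_succ_self i) hlt
    exact ⟨i, hlt, hPi, lt_of_not_ge hnot⟩
  refine ⟨?_, ?_, ?_⟩
  · -- monotonicity
    intro s hs t ht hst
    obtain ⟨i, hi, hsi⟩ := find s hs
    obtain ⟨j, hj, htj⟩ := find t ht
    rw [hG i hi s hsi, hG j hj t htj]
    have hij : i ≤ j := by
      by_contra h
      push_neg at h
      have : x (j + 1) ≤ x i := hxle h hi.le
      have : x (j + 1) ≤ s := le_trans this hsi.1
      exact absurd (lt_of_le_of_lt (le_trans this hst) htj.2) (lt_irrefl _)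
    exact cmono i j hij hj
  · -- tail inequality
    intro y hy
    rcases lt_or_eq_of_le hy.2 with hy1 | hy1
    · obtain ⟨i, hi, hyi⟩ := find y ⟨hy.1, hy1⟩
      have hi1 : i + 1 ≤ n := hi
      obtain ⟨gint, geq⟩ := step_cell (g := Ginv) (C := c i) hyi.2.le
        (fun t ht => hG i hi t ⟨le_trans hyi.1 ht.1, ht.2⟩)
      have htail := tail (n - (i + 1)) (Nat.sub_le n _)
      have hidx : n - (n - (i + 1)) = i + 1 := by omega
      rw [hidx, hxn] at htail
      obtain ⟨gtint, gteq⟩ := htail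
      have hFys : IntervalIntegrable Finv volume y (x (i+1)) :=
        subint hy (hx01 (i+1) hi1)
      have hFs1 : IntervalIntegrable Finv volume (x (i+1)) 1 := by
        have := subint (hx01 (i+1) hi1) (hx01 n le_rfl)
        rwa [hxn] at this
      rw [← intervalIntegral.integral_add_adjacent_intervals gint gtint,
        ← intervalIntegral.integral_add_adjacent_intervals hFys hFs1, geq, gteq]
      have key : (x (i+1) - y) * c i ≤ ∫ s in y..x (i+1), Finv s := by
        rw [hc]
        exact avg_tail hyi.1 hyi.2
          (hFmono.mono (Set.Icc_subset_Icc (hx01 i hi.le).1 (hx01 (i+1) hi1).2))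
          (subint (hx01 i hi.le) (hx01 (i+1) hi1))
      linarith
    · subst hy1
      simp
  · -- equality at 0
    have := tail n le_rfl
    rw [Nat.sub_self, hx0, hxn] at this
    exact this.2
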